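/- arXiv:1606.03858 — 3 statements merged into one kernel-verified Lean document; each statement's English description precedes it below -/
import Mathlib

section
/- Let μ be a Borel probability measure on ℝ^p with M_d(μ) positive definite, and let A ∈ ℝ^{p×p} be invertible and b ∈ ℝ^p. Let μ̃ be the pushforward of μ under the affine map x ↦ Ax + b. Then M_d(μ̃) is also positive definite, and Q_{μ,d}(x) = Q_{μ̃,d}(Ax + b) for all x ∈ ℝ^p, where Q_{ν,d}(x) = v_d(x)^T M_d(ν)^{-1} v_d(x). -/
open MeasureTheory Finset Matrix

/-- Multi-indices in `p` variables of total degree at most `d`. -/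
abbrev MIdx (p d : ℕ) := {α : Fin p → Fin (d + 1) // ∑ i, (α i : ℕ) ≤ d}

/-- The monomial `x ^ α`. -/
noncomputable def mon {p d : ℕ} (α : MIdx p d) (x : Fin p → ℝ) : ℝ :=
  ∏ i, x i ^ (α.1 i : ℕ)

/-- The moment matrix `M_d(μ)`, with entries `∫ x^(α+β) dμ`. -/
noncomputable def momMat {p : ℕ} (d : ℕ) (μ : Measure (Fin p → ℝ)) :
    Matrix (MIdx p d) (MIdx p d) ℝ :=
  fun α β => ∫ x, mon α x * mon β x ∂μ

/-- Evaluation of the polynomial with coefficient vector `c` at `x`. -/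
noncomputable def peval {p d : ℕ} (c : MIdx p d → ℝ) (x : Fin p → ℝ) : ℝ :=
  ∑ α, c α * mon α x

/-- The vector of monomials `v_d(x)`. -/
noncomputable def vvec {p : ℕ} (d : ℕ) (x : Fin p → ℝ) : MIdx p d → ℝ :=
  fun α => mon α x

/-- Graded lexicographic (strict) order: `glex α β` means `α <_gl β`. -/
def glex {p d : ℕ} (α β : MIdx p d) : Prop :=
  (∑ i, (α.1 i : ℕ)) < (∑ i, (β.1 i : ℕ)) ∨
    ((∑ i, (α.1 i : ℕ)) = (∑ i, (β.1 i : ℕ)) ∧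
      ∃ i, (∀ j, j < i → α.1 j = β.1 j) ∧ (β.1 i : ℕ) < (α.1 i : ℕ))

section Aux

open MvPolynomial

variable {p d : ℕ}

/-- Embedding of bounded multi-indices into finitely supported functions. -/
noncomputable def emb (β : MIdx p d) : Fin p →₀ ℕ :=
  Finsupp.equivFunOnFinite.symm (fun j => (β.1 j : ℕ))

lemma emb_apply (β : MIdx p d) (j : Fin p) : emb β j = (β.1 j : ℕ) := rfl

lemma emb_injective : Function.Injective (emb (p := p) (d := d)) := by
  intro a b h
  apply Subtype.ext; funext j
  have := congrFun (congrArg (fun f : Fin p →₀ ℕ => (f : Fin p → ℕ)) h) j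
  simpa [emb_apply, Fin.val_injective.eq_iff] using this

lemma mon_eq_prod (β : MIdx p d) (x : Fin p → ℝ) :
    mon β x = ∏ i, x i ^ (emb β) i := rfl

/-- Expansion of a polynomial of total degree ≤ d over the monomial basis. -/
lemma eval_expand (P : MvPolynomial (Fin p) ℝ) (hP : P.totalDegree ≤ d) (x : Fin p → ℝ) :
    eval x P = ∑ β : MIdx p d, coeff (emb β) P * mon β x := by
  have himg : P.support ⊆ Finset.univ.image (emb (p := p) (d := d)) := by
    intro m hm
    have hsum : (∑ j, m j) ≤ d := by
      have h1 := MvPolynomial.le_totalDegree hm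
      have h2 : m.sum (fun _ e => e) = ∑ j, m j := Finsupp.sum_fintype _ _ (fun _ => rfl)
      omega
    have hj : ∀ j, m j ≤ d := fun j =>
      le_trans (Finset.single_le_sum (f := fun j => m j) (fun _ _ => Nat.zero_le _)
        (Finset.mem_univ j)) hsum
    refine Finset.mem_image.2 ⟨⟨fun j => ⟨m j, Nat.lt_succ_of_le (hj j)⟩, by simpa using hsum⟩,
      Finset.mem_univ _, ?_⟩
    ext j; rfl
  rw [MvPolynomial.eval_eq']
  rw [show (∑ β : MIdx p d, coeff (emb β) P * mon β x)
      = ∑ m ∈ Finset.univ.image (emb (p := p) (d := d)), coeff m P * ∏ i, x i ^ m i by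
    rw [Finset.sum_image (fun a _ b _ h => emb_injective h)]
    exact Finset.sum_congr rfl fun β _ => by rw [mon_eq_prod]]
  exact Finset.sum_subset himg (fun m _ hm => by
    simp [MvPolynomial.notMem_support_iff.1 hm])

/-- Linear independence of monomials. -/
lemma peval_eq_zero {c : MIdx p d → ℝ} (h : ∀ x, peval c x = 0) : c = 0 := by
  set P : MvPolynomial (Fin p) ℝ := ∑ α : MIdx p d, monomial (emb α) (c α) with hP
  have heval : ∀ x, eval x P = peval c x := by
    intro x
    rw [hP, map_sum]
    refine Finset.sum_congr rfl fun α _ => ?_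
    rw [eval_monomial, Finsupp.prod_pow, ← mon_eq_prod]
  have hP0 : P = 0 := MvPolynomial.funext (fun x => by rw [heval, h]; simp)
  funext α
  have : coeff (emb α) P = c α := by
    rw [hP, coeff_sum]
    rw [Finset.sum_eq_single α]
    · simp [coeff_monomial]
    · intro β _ hβ
      rw [coeff_monomial, if_neg (fun hc => hβ (emb_injective hc))]
    · simp
  rw [hP0] at this
  simpa using this.symm

lemma matrix_eq_of_mulVec_vvec {M N : Matrix (MIdx p d) (MIdx p d) ℝ}
    (h : ∀ x, M *ᵥ vvec d x = N *ᵥ vvec d x) : M = N := by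
  ext α β
  have hc : (fun β => M α β - N α β) = 0 := by
    apply peval_eq_zero
    intro x
    have h2 := congrFun (h x) α
    simp only [Matrix.mulVec, dotProduct, vvec] at h2
    simp only [peval, sub_mul, Finset.sum_sub_distrib, vvec]
    rw [h2]; ring
  have := congrFun hc β
  simp only [Pi.zero_apply] at this
  linarith

/-- The polynomial representing the monomial `α` composed with an affine map. -/
noncomputable def monPoly (B : Matrix (Fin p) (Fin p) ℝ) (c : Fin p → ℝ) (α : MIdx p d) :
    MvPolynomial (Fin p) ℝ :=
  ∏ i, ((∑ j, C (B i j) * X j) + C (c i)) ^ (α.1 i : ℕ)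

lemma eval_monPoly (B : Matrix (Fin p) (Fin p) ℝ) (c : Fin p → ℝ) (α : MIdx p d)
    (x : Fin p → ℝ) : eval x (monPoly B c α) = mon α (B *ᵥ x + c) := by
  simp [monPoly, mon, Matrix.mulVec, dotProduct]

lemma totalDegree_monPoly (B : Matrix (Fin p) (Fin p) ℝ) (c : Fin p → ℝ) (α : MIdx p d) :
    (monPoly B c α).totalDegree ≤ d := by
  refine le_trans (totalDegree_finset_prod _ _) (le_trans ?_ α.2)
  refine Finset.sum_le_sum fun i _ => ?_
  refine le_trans (totalDegree_pow _ _) ?_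
  have h1 : ((∑ j, C (B i j) * X j) + C (c i)).totalDegree ≤ 1 := by
    refine le_trans (totalDegree_add _ _) (max_le ?_ (by simp))
    refine le_trans (totalDegree_finset_sum _ _) (Finset.sup_le fun j _ => ?_)
    refine le_trans (totalDegree_mul _ _) ?_
    simp [totalDegree_X]
  calc (α.1 i : ℕ) * ((∑ j, C (B i j) * X j) + C (c i)).totalDegree
      ≤ (α.1 i : ℕ) * 1 := Nat.mul_le_mul_left _ h1
    _ = (α.1 i : ℕ) := Nat.mul_one _

/-- The transfer matrix of an affine map on the monomial vector. -/
noncomputable def tmat (d : ℕ) (B : Matrix (Fin p) (Fin p) ℝ) (c : Fin p → ℝ) :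
    Matrix (MIdx p d) (MIdx p d) ℝ :=
  fun α β => coeff (emb β) (monPoly B c α)

lemma tmat_mulVec (B : Matrix (Fin p) (Fin p) ℝ) (c : Fin p → ℝ) (x : Fin p → ℝ) :
    tmat d B c *ᵥ vvec d x = vvec d (B *ᵥ x + c) := by
  funext α
  simp only [Matrix.mulVec, dotProduct, tmat, vvec]
  rw [← eval_expand _ (totalDegree_monPoly B c α), eval_monPoly]

end Aux


lemma dot_conj {n : Type*} [Fintype n] (T N : Matrix n n ℝ) (v : n → ℝ) :
    (T *ᵥ v) ⬝ᵥ N *ᵥ (T *ᵥ v) = v ⬝ᵥ (Tᵀ * N * T) *ᵥ v := by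
  rw [Matrix.mulVec_mulVec, Matrix.dotProduct_mulVec, Matrix.vecMul_mulVec,
    ← Matrix.dotProduct_mulVec, ← Matrix.mul_assoc]

lemma posdef_conj {n : Type*} [Fintype n] [DecidableEq n] {M T : Matrix n n ℝ}
    (hM : M.PosDef) (hT : IsUnit T) : (T * M * Tᵀ).PosDef := by
  have hTt : IsUnit Tᵀ := (Matrix.isUnit_iff_isUnit_det _).2
    (by rw [Matrix.det_transpose]; exact (Matrix.isUnit_iff_isUnit_det T).1 hT)
  refine Matrix.PosDef.of_dotProduct_mulVec_pos ?_ ?_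
  · have h1 : Mᴴ = M := hM.isHermitian
    show (T * M * Tᵀ)ᴴ = T * M * Tᵀ
    rw [Matrix.conjTranspose_mul, Matrix.conjTranspose_mul, h1]
    rw [Matrix.conjTranspose_eq_transpose_of_trivial, Matrix.conjTranspose_eq_transpose_of_trivial,
      Matrix.transpose_transpose, Matrix.mul_assoc]
  · intro x hx
    have hx' : Tᵀ *ᵥ x ≠ 0 := by
      intro h0
      apply hx
      have := (Matrix.mulVec_injective_iff_isUnit.mpr hTt)
      have h1 : Tᵀ *ᵥ x = Tᵀ *ᵥ 0 := by rw [h0, Matrix.mulVec_zero]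
      exact this h1
    have h2 := hM.dotProduct_mulVec_pos hx'
    rw [star_trivial, dot_conj Tᵀ M x, Matrix.transpose_transpose] at h2
    simpa [Matrix.mul_assoc] using h2

/-- affine invariance of the inverse moment matrix SOS polynomial. -/
theorem inverse_moment_sos_affine_invariant {p d : ℕ} (μ : Measure (Fin p → ℝ))
    [IsProbabilityMeasure μ]
    (hmom : ∀ α : Fin p → ℕ, Integrable (fun x => ∏ i, x i ^ α i) μ)
    (hpd : (momMat d μ).PosDef)
    (A : Matrix (Fin p) (Fin p) ℝ) (hA : IsUnit A) (b : Fin p → ℝ) :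
    (momMat d (Measure.map (fun x => A *ᵥ x + b) μ)).PosDef ∧
      ∀ x : Fin p → ℝ,
        vvec d x ⬝ᵥ (momMat d μ)⁻¹ *ᵥ vvec d x =
          vvec d (A *ᵥ x + b) ⬝ᵥ
            (momMat d (Measure.map (fun x => A *ᵥ x + b) μ))⁻¹ *ᵥ
              vvec d (A *ᵥ x + b) := by
  have hAdet : IsUnit A.det := (Matrix.isUnit_iff_isUnit_det A).1 hA
  set T : Matrix (MIdx p d) (MIdx p d) ℝ := tmat d A b with hT
  set T' : Matrix (MIdx p d) (MIdx p d) ℝ := tmat d A⁻¹ (-(A⁻¹ *ᵥ b)) with hT'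
  have hinv : ∀ x : Fin p → ℝ, A⁻¹ *ᵥ (A *ᵥ x + b) + -(A⁻¹ *ᵥ b) = x := by
    intro x
    rw [Matrix.mulVec_add, Matrix.mulVec_mulVec, Matrix.nonsing_inv_mul A hAdet,
      Matrix.one_mulVec]
    abel
  have hT'T : T' * T = 1 := by
    apply matrix_eq_of_mulVec_vvec
    intro x
    rw [← Matrix.mulVec_mulVec, tmat_mulVec, tmat_mulVec, hinv, Matrix.one_mulVec]
  have hTdet : IsUnit T.det := IsUnit.of_mul_eq_one T'.det
    (by rw [mul_comm, ← Matrix.det_mul, hT'T, Matrix.det_one])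
  have hTunit : IsUnit T := (Matrix.isUnit_iff_isUnit_det T).2 hTdet
  have hTtdet : IsUnit Tᵀ.det := by rw [Matrix.det_transpose]; exact hTdet
  have hfc : Continuous (fun x : Fin p → ℝ => A *ᵥ x + b) :=
    ((Matrix.mulVecLin A).continuous_of_finiteDimensional).add continuous_const
  have hmonc : ∀ α : MIdx p d, Continuous (mon α) := fun α =>
    continuous_finset_prod _ fun i _ => (continuous_apply i).pow _
  have hint : ∀ α β : MIdx p d, Integrable (fun x => mon α x * mon β x) μ := by
    intro α β
    have h := hmom (fun i => (α.1 i : ℕ) + (β.1 i : ℕ))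
    simpa [mon, pow_add, Finset.prod_mul_distrib] using h
  have hmm : momMat d (Measure.map (fun x => A *ᵥ x + b) μ) = T * momMat d μ * Tᵀ := by
    ext α β
    have hmonf : ∀ (γ : MIdx p d) (x : Fin p → ℝ),
        mon γ (A *ᵥ x + b) = ∑ δ, T γ δ * mon δ x := by
      intro γ x
      have h := congrFun (tmat_mulVec A b x) γ
      simpa [Matrix.mulVec, dotProduct, vvec] using h.symm
    show (∫ y, mon α y * mon β y ∂(Measure.map (fun x => A *ᵥ x + b) μ)) = _
    rw [MeasureTheory.integral_map (f := fun y => mon α y * mon β y) hfc.aemeasurable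
      ((hmonc α).mul (hmonc β)).aestronglyMeasurable]
    calc (∫ x, mon α (A *ᵥ x + b) * mon β (A *ᵥ x + b) ∂μ)
        = ∫ x, ∑ γ, ∑ δ, T α γ * T β δ * (mon γ x * mon δ x) ∂μ := by
          congr 1; funext x
          rw [hmonf α, hmonf β, Finset.sum_mul_sum]
          exact Finset.sum_congr rfl fun γ _ => Finset.sum_congr rfl fun δ _ => by ring
      _ = ∑ γ, ∑ δ, T α γ * T β δ * momMat d μ γ δ := by
          rw [MeasureTheory.integral_finset_sum _ (fun γ _ =>
            integrable_finset_sum _ (fun δ _ => (hint γ δ).const_mul _))]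
          refine Finset.sum_congr rfl fun γ _ => ?_
          rw [MeasureTheory.integral_finset_sum _ (fun δ _ => (hint γ δ).const_mul _)]
          refine Finset.sum_congr rfl fun δ _ => ?_
          rw [MeasureTheory.integral_const_mul]; rfl
      _ = (T * momMat d μ * Tᵀ) α β := by
          rw [Finset.sum_comm]
          simp only [Matrix.mul_apply, Matrix.transpose_apply, Finset.sum_mul]
          refine Finset.sum_congr rfl fun δ _ => Finset.sum_congr rfl fun γ _ => by ring
  have hpd2 : (momMat d (Measure.map (fun x => A *ᵥ x + b) μ)).PosDef := by
    rw [hmm]; exact posdef_conj hpd hTunit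
  refine ⟨hpd2, fun x => ?_⟩
  have hv : vvec d (A *ᵥ x + b) = T *ᵥ vvec d x := by
    rw [← tmat_mulVec A b x]
  rw [hv, hmm, Matrix.mul_inv_rev, Matrix.mul_inv_rev, dot_conj]
  congr 2
  rw [Matrix.mul_nonsing_inv_cancel_left _ _ hTtdet,
    Matrix.nonsing_inv_mul_cancel_right _ _ hTdet]
end

section
/- Let μ be a Borel probability measure on ℝ^p with M_d(μ) positive definite, and let x̄ ∈ ℝ^p. Then the Christoffel function identity holds: Q_{μ,d}(x̄)^{-1} = min over polynomials P of degree ≤ d with P(x̄) = 1 of ∫_{ℝ^p} P(x)^2 dμ(x), and the minimum is attained. -/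
open MeasureTheory Finset Matrix

lemma integrable_mon_mul {p d : ℕ} {μ : Measure (Fin p → ℝ)}
    (hmom : ∀ α : Fin p → ℕ, Integrable (fun x => ∏ i, x i ^ α i) μ)
    (α β : MIdx p d) : Integrable (fun x => mon α x * mon β x) μ := by
  have := hmom (fun i => (α.1 i : ℕ) + (β.1 i : ℕ))
  simpa [mon, pow_add, Finset.prod_mul_distrib] using this

lemma integral_peval_sq {p d : ℕ} {μ : Measure (Fin p → ℝ)}
    (hmom : ∀ α : Fin p → ℕ, Integrable (fun x => ∏ i, x i ^ α i) μ)
    (c : MIdx p d → ℝ) :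
    ∫ x, (peval c x) ^ 2 ∂μ = c ⬝ᵥ (momMat d μ) *ᵥ c := by
  have hfun : ∀ x : Fin p → ℝ, (peval c x) ^ 2 =
      ∑ α : MIdx p d, ∑ β : MIdx p d, c α * c β * (mon α x * mon β x) := by
    intro x
    simp only [peval, sq, Finset.sum_mul_sum]
    exact Finset.sum_congr rfl fun α _ => Finset.sum_congr rfl fun β _ => by ring
  calc ∫ x, (peval c x) ^ 2 ∂μ
      = ∫ x, ∑ α : MIdx p d, ∑ β : MIdx p d, c α * c β * (mon α x * mon β x) ∂μ := by
        simp only [hfun]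
    _ = ∑ α : MIdx p d, ∑ β : MIdx p d, c α * c β * momMat d μ α β := by
        rw [integral_finset_sum]
        · refine Finset.sum_congr rfl fun α _ => ?_
          rw [integral_finset_sum]
          · refine Finset.sum_congr rfl fun β _ => ?_
            rw [integral_const_mul]
            rfl
          · exact fun β _ => ((integrable_mon_mul hmom α β).const_mul _)
        · exact fun α _ => integrable_finset_sum _
            (fun β _ => ((integrable_mon_mul hmom α β).const_mul _))
    _ = c ⬝ᵥ (momMat d μ) *ᵥ c := by
        simp only [dotProduct, mulVec, Finset.mul_sum]
        exact Finset.sum_congr rfl fun α _ => Finset.sum_congr rfl fun β _ => by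
          ring
theorem christoffel_function_eq_min {p d : ℕ} (μ : Measure (Fin p → ℝ))
    [IsProbabilityMeasure μ]
    (hmom : ∀ α : Fin p → ℕ, Integrable (fun x => ∏ i, x i ^ α i) μ)
    (hpd : (momMat d μ).PosDef) (xbar : Fin p → ℝ) :
    IsLeast {t : ℝ | ∃ c : MIdx p d → ℝ, peval c xbar = 1 ∧ t = ∫ x, (peval c x) ^ 2 ∂μ}
      (vvec d xbar ⬝ᵥ (momMat d μ)⁻¹ *ᵥ vvec d xbar)⁻¹ := by
  set M := momMat d μ with hM
  set v := vvec d xbar with hv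
  set b : MIdx p d → ℝ := M⁻¹ *ᵥ v with hb
  set Q : ℝ := v ⬝ᵥ b with hQ
  -- basic facts
  have hMb : M *ᵥ b = v := by
    rw [hb, Matrix.mulVec_mulVec, Matrix.mul_nonsing_inv _ hpd.det_pos.ne'.isUnit,
      Matrix.one_mulVec]
  have hMsymm : ∀ α β, M α β = M β α := fun α β => by
    simp [hM, momMat, mul_comm]
  have hs : ∀ x y : MIdx p d → ℝ, x ⬝ᵥ M *ᵥ y = y ⬝ᵥ M *ᵥ x := by
    intro x y
    simp only [dotProduct, mulVec, Finset.mul_sum]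
    rw [Finset.sum_comm]
    exact Finset.sum_congr rfl fun α _ => Finset.sum_congr rfl fun β _ => by
      rw [hMsymm β α]; ring
  have hpev : ∀ c : MIdx p d → ℝ, peval c xbar = c ⬝ᵥ v := fun c => rfl
  have hvne : v ≠ 0 := by
    intro h
    have h0 : v ⟨fun _ => 0, by simp⟩ = 1 := by simp [hv, vvec, mon]
    rw [h] at h0
    simp at h0
  have hbne : b ≠ 0 := by
    intro h
    apply hvne
    rw [← hMb, h, Matrix.mulVec_zero]
  have hbMb : b ⬝ᵥ M *ᵥ b = Q := by rw [hMb, hQ, dotProduct_comm]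
  have hQpos : 0 < Q := by
    rw [← hbMb]
    have := hpd.dotProduct_mulVec_pos hbne
    simpa using this
  constructor
  · -- membership: the minimizer Q⁻¹ • b
    refine ⟨Q⁻¹ • b, ?_, ?_⟩
    · rw [hpev, smul_dotProduct, smul_eq_mul,
        show b ⬝ᵥ v = Q from by rw [hQ, dotProduct_comm]]
      exact inv_mul_cancel₀ hQpos.ne'
    · rw [integral_peval_sq hmom]
      simp only [smul_dotProduct, Matrix.mulVec_smul, dotProduct_smul,
        smul_eq_mul, hbMb]
      field_simp
      exact hbMb.symm
  · -- lower bound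
    rintro t ⟨c, hc1, rfl⟩
    rw [integral_peval_sq hmom]
    rw [hpev] at hc1
    have hcMb : c ⬝ᵥ M *ᵥ b = 1 := by rw [hMb]; exact hc1
    have hbMc : b ⬝ᵥ M *ᵥ c = 1 := by rw [hs]; exact hcMb
    have key : 0 ≤ (c - Q⁻¹ • b) ⬝ᵥ M *ᵥ (c - Q⁻¹ • b) := by
      have := hpd.posSemidef.dotProduct_mulVec_nonneg (c - Q⁻¹ • b)
      simpa using this
    have expand : (c - Q⁻¹ • b) ⬝ᵥ M *ᵥ (c - Q⁻¹ • b) = c ⬝ᵥ M *ᵥ c - Q⁻¹ := by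
      simp only [Matrix.mulVec_sub, Matrix.mulVec_smul, sub_dotProduct,
        dotProduct_sub, smul_dotProduct, dotProduct_smul,
        smul_eq_mul, hcMb, hbMc, hbMb]
      field_simp
      ring
    linarith [expand ▸ key]
end

section
/- Let μ be a Borel probability measure on ℝ^p with mean m = ∫ x dμ, second moment matrix S = ∫ x x^T dμ, and covariance V = S − m m^T assumed positive definite. Then the inverse moment matrix SOS polynomial of degree 2 satisfies Q_{μ,1}(x) = 1 + (x − m)^T V^{-1} (x − m) for all x ∈ ℝ^p. -/
open MeasureTheory Finset Matrix

def idx0 (p : ℕ) : MIdx p 1 := ⟨fun _ => 0, by simp⟩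

def idx1 {p : ℕ} (i : Fin p) : MIdx p 1 :=
  ⟨fun j => if j = i then 1 else 0, by
    have h : ∀ j : Fin p, (Fin.val (if j = i then (1:Fin 2) else 0)) = if j = i then 1 else 0 := by
      intro j; split <;> rfl
    calc ∑ j, (Fin.val (if j = i then (1:Fin 2) else 0)) = ∑ j, if j = i then 1 else 0 :=
          Finset.sum_congr rfl fun j _ => h j
      _ ≤ 1 := by simp⟩

lemma mon_idx0 {p : ℕ} (x : Fin p → ℝ) : mon (idx0 p) x = 1 := by
  simp [mon, idx0]

lemma mon_idx1 {p : ℕ} (i : Fin p) (x : Fin p → ℝ) : mon (idx1 i) x = x i := by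
  have h : ∀ j : Fin p, x j ^ (Fin.val (if j = i then (1:Fin 2) else 0)) = if j = i then x j else 1 := by
    intro j; split <;> simp
  calc mon (idx1 i) x = ∏ j, if j = i then x j else 1 := Finset.prod_congr rfl fun j _ => h j
    _ = x i := by simp

def oemap (p : ℕ) : Option (Fin p) → MIdx p 1 := fun o => o.elim (idx0 p) idx1

lemma oemap_bij {p : ℕ} : Function.Bijective (oemap p) := by
  constructor
  · rintro (_|i) (_|j) h
    · rfl
    · exfalso
      have := congrFun (congrArg Subtype.val h) j
      simp [oemap, idx0, idx1] at this
    · exfalso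
      have := congrFun (congrArg Subtype.val h) i
      simp [oemap, idx0, idx1] at this
    · have := congrFun (congrArg Subtype.val h) i
      simp only [oemap, Option.elim, idx1, if_pos rfl] at this
      by_cases hij : i = j
      · exact congrArg some hij
      · simp [hij] at this
  · rintro ⟨α, hα⟩
    have hle : ∀ j, (α j : ℕ) ≤ 1 := fun j =>
      le_trans (Finset.single_le_sum (f := fun j => (α j : ℕ)) (fun _ _ => Nat.zero_le _) (mem_univ j)) hα
    rcases Nat.le_one_iff_eq_zero_or_eq_one.mp hα with h0 | h1
    · refine ⟨none, ?_⟩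
      apply Subtype.ext
      funext j
      have hz : (α j : ℕ) = 0 := Finset.sum_eq_zero_iff.mp h0 j (mem_univ j)
      exact (Fin.ext hz).symm
    · obtain ⟨i, _, hi⟩ := Finset.exists_ne_zero_of_sum_ne_zero (h1 ▸ one_ne_zero)
      have hi1 : (α i : ℕ) = 1 := le_antisymm (hle i) (Nat.one_le_iff_ne_zero.mpr hi)
      refine ⟨some i, ?_⟩
      apply Subtype.ext
      funext j
      show (if j = i then (1:Fin 2) else 0) = α j
      by_cases hj : j = i
      · subst hj; simp only [if_pos rfl]; exact (Fin.ext hi1).symm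
      · simp only [if_neg hj]
        have hrest : ∑ k ∈ univ.erase i, (α k : ℕ) = 0 := by
          have h2 : ∑ k ∈ univ.erase i, (α k : ℕ) + (α i : ℕ) = 1 := by
            rw [Finset.sum_erase_add _ _ (mem_univ i)]; exact h1
          omega
        have := Finset.sum_eq_zero_iff.mp hrest j (Finset.mem_erase.mpr ⟨hj, mem_univ j⟩)
        exact (Fin.ext this).symm

/-- The explicit Schur-complement inverse of the degree-1 moment matrix, indexed by
`Option (Fin p)`. -/
noncomputable def Nmat {p : ℕ} (m : Fin p → ℝ) (W : Matrix (Fin p) (Fin p) ℝ) :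
    Matrix (Option (Fin p)) (Option (Fin p)) ℝ
  | none, none => 1 + m ⬝ᵥ W *ᵥ m
  | none, some j => -(W *ᵥ m) j
  | some i, none => -(W *ᵥ m) i
  | some i, some j => W i j

@[simp] lemma Nmat_nn {p : ℕ} (m : Fin p → ℝ) (W : Matrix (Fin p) (Fin p) ℝ) :
    Nmat m W none none = 1 + m ⬝ᵥ W *ᵥ m := rfl
@[simp] lemma Nmat_ns {p : ℕ} (m : Fin p → ℝ) (W : Matrix (Fin p) (Fin p) ℝ) (j : Fin p) :
    Nmat m W none (some j) = -(W *ᵥ m) j := rfl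
@[simp] lemma Nmat_sn {p : ℕ} (m : Fin p → ℝ) (W : Matrix (Fin p) (Fin p) ℝ) (i : Fin p) :
    Nmat m W (some i) none = -(W *ᵥ m) i := rfl
@[simp] lemma Nmat_ss {p : ℕ} (m : Fin p → ℝ) (W : Matrix (Fin p) (Fin p) ℝ) (i j : Fin p) :
    Nmat m W (some i) (some j) = W i j := rfl

lemma mulVec_apply' {n R : Type*} [Fintype n] [NonUnitalNonAssocSemiring R]
    (M : Matrix n n R) (v : n → R) (i : n) : (M *ᵥ v) i = ∑ j, M i j * v j := rfl

/-- for `d = 1`, the inverse moment matrix SOS polynomial is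
`1 + (x - m)ᵀ V⁻¹ (x - m)`, the (shifted squared) Mahalanobis distance. -/
theorem inverse_moment_sos_deg_one_mahalanobis {p : ℕ} (μ : Measure (Fin p → ℝ))
    [IsProbabilityMeasure μ]
    (hmom : ∀ α : Fin p → ℕ, Integrable (fun x => ∏ i, x i ^ α i) μ)
    (m : Fin p → ℝ) (hm : m = fun i => ∫ x, x i ∂μ)
    (S : Matrix (Fin p) (Fin p) ℝ) (hS : S = fun i j => ∫ x, x i * x j ∂μ)
    (V : Matrix (Fin p) (Fin p) ℝ) (hV : V = S - vecMulVec m m)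
    (hVpd : V.PosDef) :
    ∀ x : Fin p → ℝ,
      vvec 1 x ⬝ᵥ (momMat 1 μ)⁻¹ *ᵥ vvec 1 x =
        1 + (x - m) ⬝ᵥ V⁻¹ *ᵥ (x - m) := by
  intro x
  set W := V⁻¹ with hW
  have hWs : ∀ i j, W i j = W j i := by
    intro i j
    rw [hW]
    simpa using hVpd.1.inv.apply j i
  have hVW : V * W = 1 := Matrix.mul_nonsing_inv V hVpd.det_pos.ne'.isUnit
  have hSsplit : ∀ i k, S i k = V i k + m i * m k := by
    intro i k
    rw [hV]
    simp [Matrix.sub_apply, vecMulVec_apply]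
  -- the equivalence
  let e : Option (Fin p) ≃ MIdx p 1 := Equiv.ofBijective (oemap p) oemap_bij
  have he0 : e none = idx0 p := rfl
  have he1 : ∀ i, e (some i) = idx1 i := fun _ => rfl
  -- moment matrix entries
  have h00 : momMat 1 μ (idx0 p) (idx0 p) = 1 := by
    simp only [momMat, mon_idx0, mul_one]
    simp
  have h0j : ∀ j, momMat 1 μ (idx0 p) (idx1 j) = m j := by
    intro j
    simp only [momMat, mon_idx0, mon_idx1, one_mul]
    rw [hm]
  have hj0 : ∀ i, momMat 1 μ (idx1 i) (idx0 p) = m i := by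
    intro i
    simp only [momMat, mon_idx0, mon_idx1, mul_one]
    rw [hm]
  have hij : ∀ i j, momMat 1 μ (idx1 i) (idx1 j) = S i j := by
    intro i j
    simp only [momMat, mon_idx1]
    rw [hS]
  have hWmv : ∀ j, ∑ k, m k * W k j = (W *ᵥ m) j := by
    intro j
    rw [mulVec_apply']
    exact Finset.sum_congr rfl fun k _ => by rw [hWs k j]; ring
  have hmul : ∀ i j, ∑ k, S i k * W k j = (if i = j then 1 else 0) + m i * (W *ᵥ m) j := by
    intro i j
    calc ∑ k, S i k * W k j = ∑ k, (V i k * W k j + m i * (m k * W k j)) := by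
          refine Finset.sum_congr rfl fun k _ => ?_
          rw [hSsplit]; ring
      _ = ∑ k, V i k * W k j + m i * ∑ k, m k * W k j := by
          rw [Finset.sum_add_distrib, Finset.mul_sum]
      _ = (if i = j then 1 else 0) + m i * (W *ᵥ m) j := by
          rw [hWmv]
          congr 1
          have h1 : (V * W) i j = (1 : Matrix (Fin p) (Fin p) ℝ) i j := by rw [hVW]
          rw [Matrix.mul_apply] at h1
          rw [h1, Matrix.one_apply]
  have hSWm : ∀ i, ∑ j, S i j * (W *ᵥ m) j = m i + m i * (m ⬝ᵥ W *ᵥ m) := by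
    intro i
    calc ∑ j, S i j * (W *ᵥ m) j = ∑ j, ∑ k, S i j * (W j k * m k) := by
          refine Finset.sum_congr rfl fun j _ => ?_
          rw [mulVec_apply', Finset.mul_sum]
      _ = ∑ k, (∑ j, S i j * W j k) * m k := by
          rw [Finset.sum_comm]
          refine Finset.sum_congr rfl fun k _ => ?_
          rw [Finset.sum_mul]
          exact Finset.sum_congr rfl fun j _ => by ring
      _ = ∑ k, ((if i = k then 1 else 0) + m i * (W *ᵥ m) k) * m k := by
          exact Finset.sum_congr rfl fun k _ => by rw [hmul]
      _ = m i + m i * (m ⬝ᵥ W *ᵥ m) := by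
          simp only [add_mul, ite_mul, one_mul, zero_mul, Finset.sum_add_distrib,
            Finset.sum_ite_eq, mem_univ, if_true]
          congr 1
          rw [dotProduct, Finset.mul_sum]
          exact Finset.sum_congr rfl fun k _ => by ring
  -- block product is the identity
  have hMN : (momMat 1 μ).submatrix e e * Nmat m W = 1 := by
    ext a b
    rw [Matrix.mul_apply, Fintype.sum_option]
    cases a <;> cases b
    · -- none none
      simp only [Matrix.submatrix_apply, he0, he1, h00, h0j, Nmat_nn, Nmat_sn,
        Matrix.one_apply_eq]
      have h2 : ∑ j, m j * -(W *ᵥ m) j = -(m ⬝ᵥ W *ᵥ m) := by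
        rw [dotProduct, ← Finset.sum_neg_distrib]
        exact Finset.sum_congr rfl fun j _ => by ring
      rw [h2]; ring
    · -- none some
      rename_i j
      simp only [Matrix.submatrix_apply, he0, he1, h00, h0j, Nmat_ns, Nmat_ss]
      rw [hWmv]
      simp [Matrix.one_apply]
    · -- some none
      rename_i i
      simp only [Matrix.submatrix_apply, he0, he1, hj0, hij, Nmat_nn, Nmat_sn]
      have h2 : ∑ j, S i j * -(W *ᵥ m) j = -(m i + m i * (m ⬝ᵥ W *ᵥ m)) := by
        rw [← hSWm i, ← Finset.sum_neg_distrib]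
        exact Finset.sum_congr rfl fun j _ => by ring
      rw [h2]
      simp only [Matrix.one_apply, reduceCtorEq, if_false]
      ring
    · -- some some
      rename_i i j
      simp only [Matrix.submatrix_apply, he0, he1, hj0, hij, Nmat_ns, Nmat_ss]
      rw [hmul]
      simp only [Matrix.one_apply, Option.some.injEq]
      ring
  -- hence the inverse of the moment matrix
  have hMrepr : momMat 1 μ = ((momMat 1 μ).submatrix e e).submatrix e.symm e.symm := by
    ext α β
    simp
  have hright : momMat 1 μ * (Nmat m W).submatrix e.symm e.symm = 1 := by
    rw [hMrepr, Matrix.submatrix_mul_equiv, hMN, Matrix.submatrix_one_equiv]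
  have hinv : (momMat 1 μ)⁻¹ = (Nmat m W).submatrix e.symm e.symm :=
    Matrix.inv_eq_right_inv hright
  rw [hinv]
  -- now compute the quadratic form
  set u : Option (Fin p) → ℝ := fun o => o.elim 1 x with hu
  have hunone : u none = 1 := rfl
  have husome : ∀ i, u (some i) = x i := fun _ => rfl
  have hvv : ∀ o : Option (Fin p), vvec 1 x (e o) = u o := by
    rintro (_ | i)
    · exact mon_idx0 x
    · exact mon_idx1 i x
  have hquad : vvec 1 x ⬝ᵥ (Nmat m W).submatrix e.symm e.symm *ᵥ vvec 1 x
      = u ⬝ᵥ Nmat m W *ᵥ u := by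
    rw [dotProduct, dotProduct]
    refine (Fintype.sum_equiv e (fun o => u o * (Nmat m W *ᵥ u) o)
      (fun α => vvec 1 x α * ((Nmat m W).submatrix e.symm e.symm *ᵥ vvec 1 x) α) ?_).symm
    intro o
    rw [hvv o]
    congr 1
    rw [mulVec_apply', mulVec_apply']
    refine Fintype.sum_equiv e (fun b => Nmat m W o b * u b)
      (fun β => (Nmat m W).submatrix e.symm e.symm (e o) β * vvec 1 x β) ?_
    intro b
    rw [hvv b, Matrix.submatrix_apply, Equiv.symm_apply_apply, Equiv.symm_apply_apply]
  rw [hquad]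
  have hNu_none : (Nmat m W *ᵥ u) none = (1 + m ⬝ᵥ W *ᵥ m) - x ⬝ᵥ W *ᵥ m := by
    rw [mulVec_apply', Fintype.sum_option]
    simp only [Nmat_nn, Nmat_ns, hunone, husome]
    have h2 : ∑ j, -(W *ᵥ m) j * x j = -(x ⬝ᵥ W *ᵥ m) := by
      rw [dotProduct, ← Finset.sum_neg_distrib]
      exact Finset.sum_congr rfl fun j _ => by ring
    rw [h2]; ring
  have hNu_some : ∀ i, (Nmat m W *ᵥ u) (some i) = -(W *ᵥ m) i + (W *ᵥ x) i := by
    intro i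
    rw [mulVec_apply', Fintype.sum_option]
    simp only [Nmat_sn, Nmat_ss, hunone, husome]
    rw [mulVec_apply' W x i]
    ring
  rw [dotProduct, Fintype.sum_option, hNu_none]
  simp only [hNu_some, hunone, husome]
  have hsum : ∑ i, x i * (-(W *ᵥ m) i + (W *ᵥ x) i) = -(x ⬝ᵥ W *ᵥ m) + x ⬝ᵥ W *ᵥ x := by
    rw [dotProduct, dotProduct, ← Finset.sum_neg_distrib, ← Finset.sum_add_distrib]
    exact Finset.sum_congr rfl fun i _ => by ring
  rw [hsum]
  have hxm : m ⬝ᵥ W *ᵥ x = x ⬝ᵥ W *ᵥ m := by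
    rw [dotProduct, dotProduct]
    calc ∑ i, m i * (W *ᵥ x) i = ∑ i, ∑ j, m i * (W i j * x j) := by
          refine Finset.sum_congr rfl fun i _ => ?_
          rw [mulVec_apply', Finset.mul_sum]
      _ = ∑ j, ∑ i, m i * (W i j * x j) := Finset.sum_comm
      _ = ∑ j, x j * (W *ᵥ m) j := by
          refine Finset.sum_congr rfl fun j _ => ?_
          rw [mulVec_apply', Finset.mul_sum]
          refine Finset.sum_congr rfl fun i _ => ?_
          rw [hWs j i]; ring
  have hexp : (x - m) ⬝ᵥ W *ᵥ (x - m)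
      = x ⬝ᵥ W *ᵥ x - x ⬝ᵥ W *ᵥ m - m ⬝ᵥ W *ᵥ x + m ⬝ᵥ W *ᵥ m := by
    rw [Matrix.mulVec_sub, sub_dotProduct, dotProduct_sub, dotProduct_sub]
    ring
  rw [hexp, hxm]
  ring
end
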